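/- Let n ≥ 1 and define, for permutations s, t of Fin n (viewed as words of length n), the overlap distance d(s,t) to be the least k with 0 ≤ k ≤ n such that the suffix of s of length n−k equals the prefix of t of length n−k. Then for every list p₀, p₁, …, p_{n!−1} containing each of the n! permutations of Fin n exactly once, there exists a superpermutation on n symbols of length n + ∑_{i=0}^{n!−2} d(p_i, p_{i+1}). -/

import Mathlib

/-- A superpermutation on `n` symbols: a word over `Fin n` containing every
permutation of `Fin n` (viewed as the word `σ 0, σ 1, …, σ (n-1)`) as a
contiguous substring (infix). -/
def IsSuperperm (n : ℕ) (w : List (Fin n)) : Prop :=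
  ∀ σ : Equiv.Perm (Fin n), List.ofFn ⇑σ <:+: w

/-- The overlap distance `d(s,t)`: the least `k` with `0 ≤ k ≤ n` such that the
suffix of `s` of length `n - k` equals the prefix of `t` of length `n - k`. -/
noncomputable def ovd (n : ℕ) (s t : List (Fin n)) : ℕ :=
  sInf {k | k ≤ n ∧ s.drop k = t.take (n - k)}

lemma ovd_spec (n : ℕ) (s t : List (Fin n)) (hs : s.length ≤ n) :
    ovd n s t ≤ n ∧ s.drop (ovd n s t) = t.take (n - ovd n s t) := by
  have h : n ∈ {k | k ≤ n ∧ s.drop k = t.take (n - k)} := by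
    constructor
    · exact le_refl n
    · simp [List.drop_eq_nil_of_le hs]
  exact Nat.sInf_mem ⟨n, h⟩

lemma key (n : ℕ) : ∀ l : List (Equiv.Perm (Fin n)), ∀ σ : Equiv.Perm (Fin n),
    ∃ w : List (Fin n),
    (∀ τ ∈ σ :: l, List.ofFn ⇑τ <:+: w) ∧ List.ofFn ⇑σ <+: w ∧
    w.length = n + (((σ :: l).zip l).map
      (fun q : Equiv.Perm (Fin n) × Equiv.Perm (Fin n) =>
        ovd n (List.ofFn ⇑q.1) (List.ofFn ⇑q.2))).sum := by
  intro l
  induction l with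
  | nil =>
    intro σ
    exact ⟨List.ofFn ⇑σ, by simp, List.prefix_refl _, by simp⟩
  | cons τ rest ih =>
    intro σ
    obtain ⟨w', hinf, hpre, hlen⟩ := ih τ
    set d := ovd n (List.ofFn ⇑σ) (List.ofFn ⇑τ) with hd
    have hspec := ovd_spec n (List.ofFn ⇑σ) (List.ofFn ⇑τ) (by simp)
    refine ⟨(List.ofFn ⇑σ).take d ++ w', ?_, ?_, ?_⟩
    · intro τ' hτ'
      rcases List.mem_cons.1 hτ' with h | h
      · subst h
        refine List.IsPrefix.isInfix ?_
        obtain ⟨r, hr⟩ := hpre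
        refine ⟨(List.ofFn ⇑τ).drop (n - d) ++ r, ?_⟩
        rw [← hr]
        conv_lhs => rw [← List.take_append_drop d (List.ofFn ⇑τ'), hspec.2]
        rw [← hd, List.append_assoc]; congr 1; rw [← List.append_assoc, List.take_append_drop]
      · exact (hinf τ' h).trans (List.suffix_append _ _).isInfix
    · obtain ⟨r, hr⟩ := hpre
      refine ⟨(List.ofFn ⇑τ).drop (n - d) ++ r, ?_⟩
      rw [← hr]
      conv_lhs => rw [← List.take_append_drop d (List.ofFn ⇑σ), hspec.2]
      rw [← hd, List.append_assoc]; congr 1; rw [← List.append_assoc, List.take_append_drop]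
    · have : ((List.ofFn ⇑σ).take d).length = d := by
        simp [hspec.1]
        exact hspec.1
      simp only [List.length_append, this, hlen, List.zip_cons_cons, List.map_cons,
        List.sum_cons]
      ring

theorem stmt_13 (n : ℕ) (hn : 1 ≤ n) (p : List (Equiv.Perm (Fin n)))
    (hp : ∀ σ : Equiv.Perm (Fin n), p.count σ = 1) :
    ∃ w : List (Fin n), IsSuperperm n w ∧
      w.length = n + ((p.zip p.tail).map (fun q : Equiv.Perm (Fin n) × Equiv.Perm (Fin n) => ovd n (List.ofFn ⇑q.1) (List.ofFn ⇑q.2))).sum := by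
  have hmem : ∀ σ : Equiv.Perm (Fin n), σ ∈ p := by
    intro σ
    have := hp σ
    exact List.count_pos_iff.1 (by omega)
  cases p with
  | nil => exact absurd (hmem 1) List.not_mem_nil
  | cons σ l =>
    obtain ⟨w, hinf, _, hlen⟩ := key n l σ
    exact ⟨w, fun τ => hinf τ (hmem τ), hlen⟩
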